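/- Let 𝒪 be the ring of integers of an imaginary quadratic field k of class number 1, Γ̄ = SU(2,1;𝒪), and 𝒬 the standard form with matrix C = [[0,0,1/√D],[0,1,0],[−1/√D,0,0]]. Suppose u and v are primitive isotropic vectors in 𝒪³ with |𝒬(u,v)|² = 1/|D|, and suppose u = (1,0,0)ᵀ. Then there exists γ ∈ Γ̄ stabilizing the line through (1,0,0)ᵀ such that γ·v is a unit multiple of (0,0,1)ᵀ. -/

import Mathlib

open Matrix Complex

noncomputable def sqrtD (D : ℝ) : ℂ := Complex.I * Real.sqrt |D|

noncomputable def formC (D : ℝ) : Matrix (Fin 3) (Fin 3) ℂ :=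
  !![0, 0, 1 / sqrtD D; 0, 1, 0; -(1 / sqrtD D), 0, 0]

noncomputable def Qform (D : ℝ) (u v : Fin 3 → ℂ) : ℂ :=
  star u ⬝ᵥ (formC D).mulVec v

noncomputable def omegaD (D : ℤ) : ℂ := ((D : ℂ) + sqrtD (D : ℝ)) / 2

noncomputable def OO (D : ℤ) : Subring ℂ := Subring.closure {omegaD D}

theorem stmt18 (D : ℤ) (hD : D < 0)
    (hdisc : D % 4 = 1 ∨ (4 : ℤ) ∣ D)
    (hpid : ∀ I : Ideal (OO D), I.IsPrincipal)
    (n p q : ℂ) (hn : n ∈ OO D) (hp : p ∈ OO D) (hq : q ∈ OO D)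
    (hprim : ∃ a b c : ℂ, a ∈ OO D ∧ b ∈ OO D ∧ c ∈ OO D ∧ a * n + b * p + c * q = 1)
    (hiso : Qform (D : ℝ) ![n, p, q] ![n, p, q] = 0)
    (hinner : ‖Qform (D : ℝ) ![1, 0, 0] ![n, p, q]‖ ^ 2 = 1 / |(D : ℝ)|) :
    ∃ γ : Matrix (Fin 3) (Fin 3) ℂ,
      (∀ i j, γ i j ∈ OO D) ∧ γ.det = 1 ∧
      γᴴ * formC (D : ℝ) * γ = formC (D : ℝ) ∧
      (∃ c : ℂ, γ.mulVec ![1, 0, 0] = c • ![1, 0, 0]) ∧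
      (∃ e e' : ℂ, e ∈ OO D ∧ e' ∈ OO D ∧ e * e' = 1 ∧
        γ.mulVec ![n, p, q] = e • ![0, 0, 1]) := by
  have hDR : ((D:ℝ)) < 0 := by exact_mod_cast hD
  set s : ℂ := sqrtD (D:ℝ) with hsdef
  have hnormsq : Complex.normSq s = |(D:ℝ)| := by
    rw [hsdef, sqrtD, Complex.normSq_mul, Complex.normSq_I, one_mul, Complex.normSq_ofReal,
      Real.mul_self_sqrt (abs_nonneg _)]
  have hs_ne : s ≠ 0 := by
    have h2 : Real.sqrt |(D:ℝ)| ≠ 0 := Real.sqrt_ne_zero'.mpr (abs_pos.mpr hDR.ne)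
    simp [hsdef, sqrtD, Complex.I_ne_zero, Complex.ofReal_eq_zero, h2]
  have hcs : (starRingEnd ℂ) s = -s := by simp [hsdef, sqrtD]
  clear_value s
  -- membership facts
  have hωmem : omegaD D ∈ OO D := Subring.subset_closure rfl
  have hDmem : ((D:ℂ)) ∈ OO D := intCast_mem (OO D) D
  have hsmem : s ∈ OO D := by
    have hrw : s = omegaD D + omegaD D - (D:ℂ) := by rw [hsdef, omegaD]; ring
    rw [hrw]
    exact Subring.sub_mem _ (Subring.add_mem _ hωmem hωmem) hDmem
  have hωconj : (starRingEnd ℂ) (omegaD D) = (D:ℂ) - omegaD D := by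
    rw [omegaD, map_div₀, map_add, ← hsdef, hcs]
    rw [map_intCast, map_ofNat]
    ring
  have hconj : ∀ x ∈ OO D, (starRingEnd ℂ) x ∈ OO D := by
    intro x hx
    have hle : Subring.closure {omegaD D} ≤ Subring.comap (starRingEnd ℂ) (OO D) := by
      apply Subring.closure_le.mpr
      rintro y ⟨rfl⟩
      refine Subring.mem_comap.mpr ?_
      rw [hωconj]
      exact Subring.sub_mem _ hDmem hωmem
    exact hle hx
  -- unit condition on q
  have hQuv : Qform (D : ℝ) ![1, 0, 0] ![n, p, q] = q / s := by
    simp [Qform, formC, Matrix.mulVec, dotProduct, Fin.sum_univ_three,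
      Matrix.vecHead, Matrix.vecTail, ← hsdef]
    ring
  have hq1 : Complex.normSq q = 1 := by
    rw [hQuv, Complex.sq_norm, Complex.normSq_div, hnormsq] at hinner
    have habs : |(D:ℝ)| ≠ 0 := abs_ne_zero.mpr hDR.ne
    field_simp at hinner
    exact hinner
  have hqq : q * (starRingEnd ℂ) q = 1 := by
    rw [Complex.mul_conj, hq1]; norm_num
  -- isotropy relation
  have hR : (starRingEnd ℂ) n * q - (starRingEnd ℂ) q * n + s * ((starRingEnd ℂ) p * p) = 0 := by
    have hexp : Qform (D : ℝ) ![n, p, q] ![n, p, q]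
        = (starRingEnd ℂ n) * q / s + (starRingEnd ℂ p) * p
          - (starRingEnd ℂ q) * n / s := by
      simp [Qform, formC, Matrix.mulVec, dotProduct, Fin.sum_univ_three,
        Matrix.vecHead, Matrix.vecTail, ← hsdef]
      ring
    rw [hexp] at hiso
    field_simp at hiso
    linear_combination hiso
  -- the matrix
  refine ⟨!![1, -(s * q * (starRingEnd ℂ) p),
             s * q * (starRingEnd ℂ) p * ((starRingEnd ℂ) q * p) - (starRingEnd ℂ) q * n;
             0, 1, -((starRingEnd ℂ) q * p);
             0, 0, 1], ?_, ?_, ?_, ?_, ?_⟩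
  · -- entries in OO
    have ha : s * q * (starRingEnd ℂ) p ∈ OO D :=
      Subring.mul_mem _ (Subring.mul_mem _ hsmem hq) (hconj p hp)
    have hb : (starRingEnd ℂ) q * n ∈ OO D := Subring.mul_mem _ (hconj q hq) hn
    have hc : (starRingEnd ℂ) q * p ∈ OO D := Subring.mul_mem _ (hconj q hq) hp
    intro i j
    fin_cases i <;> fin_cases j <;>
      simp [Matrix.vecHead, Matrix.vecTail] <;>
      first
        | exact Subring.zero_mem _
        | exact Subring.one_mem _
        | exact ha
        | exact hc
        | exact Subring.sub_mem _ (Subring.mul_mem _ ha hc) hb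
  · -- det
    simp [Matrix.det_fin_three, Matrix.vecHead, Matrix.vecTail]
  · -- unitarity
    have hMC : formC (D:ℝ) = s⁻¹ • !![0, 0, 1; 0, s, 0; -1, 0, 0] := by
      rw [formC, ← hsdef]
      ext i j
      fin_cases i <;> fin_cases j <;>
        simp [Matrix.vecHead, Matrix.vecTail] <;> field_simp
    rw [hMC, Matrix.mul_smul, Matrix.smul_mul]
    congr 1
    ext i j
    fin_cases i <;> fin_cases j <;>
      simp [Matrix.mul_apply, Matrix.conjTranspose_apply, Fin.sum_univ_three, _root_.map_mul,
        map_sub, map_neg, hcs, Matrix.vecHead, Matrix.vecTail] <;>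
      first
        | ring1
        | linear_combination (-(s * (starRingEnd ℂ) p * p)) * hqq - hR
  · refine ⟨1, ?_⟩
    funext i
    fin_cases i <;>
      simp [Matrix.mulVec, dotProduct, Fin.sum_univ_three, Matrix.vecHead,
        Matrix.vecTail]
  · refine ⟨q, (starRingEnd ℂ) q, hq, hconj q hq, hqq, ?_⟩
    funext i
    fin_cases i <;>
      simp [Matrix.mulVec, dotProduct, Fin.sum_univ_three, Matrix.vecHead,
        Matrix.vecTail] <;>
      first
        | ring1
        | linear_combination (s * q * (starRingEnd ℂ) p * p - n) * hqq
        | linear_combination (-p) * hqq
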